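/- Let 𝒵₁, 𝒵₂ be types and let f : Bool × Bool → 𝒵₁ and g : Bool × Bool → 𝒵₂. Let G be the simple graph on Bool × Bool in which distinct vertices (x, y), (x', y') are adjacent iff (x = x' and f(x, y) ≠ f(x', y')) or (y = y' and g(x, y) ≠ g(x', y')). Then the following are equivalent: (1) there exists a type 𝒵 and a map h : Bool × Bool → 𝒵 such that G equals the graph on Bool × Bool in which distinct (x, y), (x', y') are adjacent iff (x = x' and h(x, y) ≠ h(x', y')) or (y = y' and h(x, y) ≠ h(x', y')); (2) G does not have exactly one edge. -/

import Mathlib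

/-- The `Z₁Z₂`-modified rook's graph of `f : 𝒳 × 𝒴 → 𝒵₁` and `g : 𝒳 × 𝒴 → 𝒵₂`:
distinct vertices `(x, y)` and `(x', y')` are adjacent iff
(`x = x'` and `f(x, y) ≠ f(x', y')`) or (`y = y'` and `g(x, y) ≠ g(x', y')`). -/
def modifiedRookGraph {𝒳 𝒴 𝒵₁ 𝒵₂ : Type*}
    (f : 𝒳 × 𝒴 → 𝒵₁) (g : 𝒳 × 𝒴 → 𝒵₂) : SimpleGraph (𝒳 × 𝒴) where
  Adj p q := p ≠ q ∧ ((p.1 = q.1 ∧ f p ≠ f q) ∨ (p.2 = q.2 ∧ g p ≠ g q))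
  symm := ⟨by
    rintro p q ⟨hpq, h | h⟩
    · exact ⟨hpq.symm, Or.inl ⟨h.1.symm, h.2.symm⟩⟩
    · exact ⟨hpq.symm, Or.inr ⟨h.1.symm, h.2.symm⟩⟩⟩
  loopless := ⟨fun p hp => hp.1 rfl⟩

/-- The pattern graph on `Bool × Bool`: abstracts the modified rook's graph by the
four propositions governing the four potential edges. -/

def patternGraph (A B C D : Prop) : SimpleGraph (Bool × Bool) where
  Adj p q := p ≠ q ∧ ((p.1 = q.1 ∧ cond p.1 B A) ∨ (p.2 = q.2 ∧ cond p.2 D C))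
  symm := ⟨by
    rintro p q ⟨hpq, ⟨h1, h2⟩ | ⟨h1, h2⟩⟩
    · exact ⟨hpq.symm, Or.inl ⟨h1.symm, h1 ▸ h2⟩⟩
    · exact ⟨hpq.symm, Or.inr ⟨h1.symm, h1 ▸ h2⟩⟩⟩
  loopless := ⟨fun p hp => hp.1 rfl⟩

lemma pattern_congr {A B C D A' B' C' D' : Prop} (h1 : A ↔ A') (h2 : B ↔ B')
    (h3 : C ↔ C') (h4 : D ↔ D') : patternGraph A B C D = patternGraph A' B' C' D' := by
  ext ⟨p1, p2⟩ ⟨q1, q2⟩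
  cases p1 <;> cases p2 <;> cases q1 <;> cases q2 <;>
    simp [patternGraph, h1, h2, h3, h4]

lemma mem_edge {A B C D : Prop} (x : Sym2 (Bool × Bool)) :
    x ∈ (patternGraph A B C D).edgeSet ↔
      (x = s((false, false), (false, true)) ∧ A) ∨
      (x = s((true, false), (true, true)) ∧ B) ∨
      (x = s((false, false), (true, false)) ∧ C) ∨
      (x = s((false, true), (true, true)) ∧ D) := by
  induction x using Sym2.ind with
  | _ p q =>
    obtain ⟨p1, p2⟩ := p; obtain ⟨q1, q2⟩ := q
    cases p1 <;> cases p2 <;> cases q1 <;> cases q2 <;>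
      simp [patternGraph, Sym2.eq_iff]

lemma pattern_singleton {A B C D : Prop} :
    (∃ e, (patternGraph A B C D).edgeSet = {e}) ↔
      (A ∧ ¬B ∧ ¬C ∧ ¬D) ∨ (¬A ∧ B ∧ ¬C ∧ ¬D) ∨ (¬A ∧ ¬B ∧ C ∧ ¬D) ∨ (¬A ∧ ¬B ∧ ¬C ∧ D) := by
  constructor
  · rintro ⟨e, he⟩
    rw [Set.eq_singleton_iff_unique_mem] at he
    obtain ⟨hem, huniq⟩ := he
    have hA' : A → s((false, false), (false, true)) = e :=
      fun hA => huniq _ ((mem_edge _).mpr (Or.inl ⟨rfl, hA⟩))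
    have hB' : B → s((true, false), (true, true)) = e :=
      fun hB => huniq _ ((mem_edge _).mpr (Or.inr (Or.inl ⟨rfl, hB⟩)))
    have hC' : C → s((false, false), (true, false)) = e :=
      fun hC => huniq _ ((mem_edge _).mpr (Or.inr (Or.inr (Or.inl ⟨rfl, hC⟩))))
    have hD' : D → s((false, true), (true, true)) = e :=
      fun hD => huniq _ ((mem_edge _).mpr (Or.inr (Or.inr (Or.inr ⟨rfl, hD⟩))))
    rw [mem_edge] at hem
    rcases hem with ⟨rfl, hA⟩ | ⟨rfl, hB⟩ | ⟨rfl, hC⟩ | ⟨rfl, hD⟩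
    · exact Or.inl ⟨hA, fun hB => by simpa [Sym2.eq_iff] using hB' hB,
        fun hC => by simpa [Sym2.eq_iff] using hC' hC,
        fun hD => by simpa [Sym2.eq_iff] using hD' hD⟩
    · refine Or.inr (Or.inl ⟨fun hA => by simpa [Sym2.eq_iff] using hA' hA, hB,
        fun hC => by simpa [Sym2.eq_iff] using hC' hC,
        fun hD => by simpa [Sym2.eq_iff] using hD' hD⟩)
    · refine Or.inr (Or.inr (Or.inl ⟨fun hA => by simpa [Sym2.eq_iff] using hA' hA,
        fun hB => by simpa [Sym2.eq_iff] using hB' hB, hC,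
        fun hD => by simpa [Sym2.eq_iff] using hD' hD⟩))
    · refine Or.inr (Or.inr (Or.inr ⟨fun hA => by simpa [Sym2.eq_iff] using hA' hA,
        fun hB => by simpa [Sym2.eq_iff] using hB' hB,
        fun hC => by simpa [Sym2.eq_iff] using hC' hC, hD⟩))
  · rintro (⟨hA, hB, hC, hD⟩ | ⟨hA, hB, hC, hD⟩ | ⟨hA, hB, hC, hD⟩ | ⟨hA, hB, hC, hD⟩)
    · exact ⟨s((false, false), (false, true)),
        Set.ext fun x => by rw [mem_edge]; simp [hA, hB, hC, hD]⟩
    · exact ⟨s((true, false), (true, true)),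
        Set.ext fun x => by rw [mem_edge]; simp [hA, hB, hC, hD]⟩
    · exact ⟨s((false, false), (true, false)),
        Set.ext fun x => by rw [mem_edge]; simp [hA, hB, hC, hD]⟩
    · exact ⟨s((false, true), (true, true)),
        Set.ext fun x => by rw [mem_edge]; simp [hA, hB, hC, hD]⟩

lemma mrg_eq_pattern {𝒵₁ 𝒵₂ : Type*} (f : Bool × Bool → 𝒵₁) (g : Bool × Bool → 𝒵₂) :
    modifiedRookGraph f g =
      patternGraph (f (false, false) ≠ f (false, true)) (f (true, false) ≠ f (true, true))
        (g (false, false) ≠ g (true, false)) (g (false, true) ≠ g (true, true)) := by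
  ext ⟨p1, p2⟩ ⟨q1, q2⟩
  cases p1 <;> cases p2 <;> cases q1 <;> cases q2 <;>
    simp [modifiedRookGraph, patternGraph, ne_comm]

lemma noOne {𝒵 : Type*} (h : Bool × Bool → 𝒵) :
    ¬ ((h (false, false) ≠ h (false, true) ∧ ¬h (true, false) ≠ h (true, true) ∧
          ¬h (false, false) ≠ h (true, false) ∧ ¬h (false, true) ≠ h (true, true)) ∨
       (¬h (false, false) ≠ h (false, true) ∧ h (true, false) ≠ h (true, true) ∧
          ¬h (false, false) ≠ h (true, false) ∧ ¬h (false, true) ≠ h (true, true)) ∨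
       (¬h (false, false) ≠ h (false, true) ∧ ¬h (true, false) ≠ h (true, true) ∧
          h (false, false) ≠ h (true, false) ∧ ¬h (false, true) ≠ h (true, true)) ∨
       (¬h (false, false) ≠ h (false, true) ∧ ¬h (true, false) ≠ h (true, true) ∧
          ¬h (false, false) ≠ h (true, false) ∧ h (false, true) ≠ h (true, true))) := by
  rintro (⟨h1, h2, h3, h4⟩ | ⟨h1, h2, h3, h4⟩ | ⟨h1, h2, h3, h4⟩ | ⟨h1, h2, h3, h4⟩) <;>
    simp only [not_ne_iff] at *
  · exact h1 (h3.trans (h2.trans h4.symm))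
  · exact h2 (h3.symm.trans (h1.trans h4))
  · exact h3 (h1.trans (h4.trans h2.symm))
  · exact h4 (h1.symm.trans (h3.trans h2))

/-- For binary `X, Y` with full support, the pair `(f, g)` is compatible (its
modified rook's graph is the `hh`-modified rook's graph of some single function
`h`) if and only if the modified rook's graph does not have exactly one edge. -/
theorem binary_compatible_iff_not_one_edge
    {𝒵₁ 𝒵₂ : Type*} (f : Bool × Bool → 𝒵₁) (g : Bool × Bool → 𝒵₂) :
    (∃ (𝒵 : Type) (h : Bool × Bool → 𝒵),
        modifiedRookGraph f g = modifiedRookGraph h h) ↔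
      ¬ ∃ e, (modifiedRookGraph f g).edgeSet = {e} := by
  constructor
  · rintro ⟨𝒵, h, heq⟩
    rw [heq, mrg_eq_pattern h h, pattern_singleton]
    exact noOne h
  · intro hone
    rw [mrg_eq_pattern f g, pattern_singleton] at hone
    by_cases hA : f (false, false) ≠ f (false, true)
    · by_cases hB : f (true, false) ≠ f (true, true)
      · by_cases hC : g (false, false) ≠ g (true, false)
        · by_cases hD : g (false, true) ≠ g (true, true)
          · refine ⟨ℕ, fun p => if p.1 then (if p.2 then 0 else 1) else (if p.2 then 1 else 0), ?_⟩
            rw [mrg_eq_pattern f g, mrg_eq_pattern]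
            exact pattern_congr (iff_of_true hA (by decide))
              (iff_of_true hB (by decide))
              (iff_of_true hC (by decide))
              (iff_of_true hD (by decide))
          · refine ⟨ℕ, fun p => if p.1 then (if p.2 then 0 else 2) else (if p.2 then 0 else 1), ?_⟩
            rw [mrg_eq_pattern f g, mrg_eq_pattern]
            exact pattern_congr (iff_of_true hA (by decide))
              (iff_of_true hB (by decide))
              (iff_of_true hC (by decide))
              (iff_of_false hD (by decide))
        · by_cases hD : g (false, true) ≠ g (true, true)
          · refine ⟨ℕ, fun p => if p.1 then (if p.2 then 2 else 0) else (if p.2 then 1 else 0), ?_⟩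
            rw [mrg_eq_pattern f g, mrg_eq_pattern]
            exact pattern_congr (iff_of_true hA (by decide))
              (iff_of_true hB (by decide))
              (iff_of_false hC (by decide))
              (iff_of_true hD (by decide))
          · refine ⟨ℕ, fun p => if p.1 then (if p.2 then 1 else 0) else (if p.2 then 1 else 0), ?_⟩
            rw [mrg_eq_pattern f g, mrg_eq_pattern]
            exact pattern_congr (iff_of_true hA (by decide))
              (iff_of_true hB (by decide))
              (iff_of_false hC (by decide))
              (iff_of_false hD (by decide))
      · by_cases hC : g (false, false) ≠ g (true, false)
        · by_cases hD : g (false, true) ≠ g (true, true)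
          · refine ⟨ℕ, fun p => if p.1 then (if p.2 then 0 else 0) else (if p.2 then 2 else 1), ?_⟩
            rw [mrg_eq_pattern f g, mrg_eq_pattern]
            exact pattern_congr (iff_of_true hA (by decide))
              (iff_of_false hB (by decide))
              (iff_of_true hC (by decide))
              (iff_of_true hD (by decide))
          · refine ⟨ℕ, fun p => if p.1 then (if p.2 then 0 else 0) else (if p.2 then 0 else 1), ?_⟩
            rw [mrg_eq_pattern f g, mrg_eq_pattern]
            exact pattern_congr (iff_of_true hA (by decide))
              (iff_of_false hB (by decide))
              (iff_of_true hC (by decide))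
              (iff_of_false hD (by decide))
        · by_cases hD : g (false, true) ≠ g (true, true)
          · refine ⟨ℕ, fun p => if p.1 then (if p.2 then 0 else 0) else (if p.2 then 1 else 0), ?_⟩
            rw [mrg_eq_pattern f g, mrg_eq_pattern]
            exact pattern_congr (iff_of_true hA (by decide))
              (iff_of_false hB (by decide))
              (iff_of_false hC (by decide))
              (iff_of_true hD (by decide))
          · exact absurd (Or.inl ⟨hA, hB, hC, hD⟩) hone
    · by_cases hB : f (true, false) ≠ f (true, true)
      · by_cases hC : g (false, false) ≠ g (true, false)
        · by_cases hD : g (false, true) ≠ g (true, true)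
          · refine ⟨ℕ, fun p => if p.1 then (if p.2 then 2 else 1) else (if p.2 then 0 else 0), ?_⟩
            rw [mrg_eq_pattern f g, mrg_eq_pattern]
            exact pattern_congr (iff_of_false hA (by decide))
              (iff_of_true hB (by decide))
              (iff_of_true hC (by decide))
              (iff_of_true hD (by decide))
          · refine ⟨ℕ, fun p => if p.1 then (if p.2 then 0 else 1) else (if p.2 then 0 else 0), ?_⟩
            rw [mrg_eq_pattern f g, mrg_eq_pattern]
            exact pattern_congr (iff_of_false hA (by decide))
              (iff_of_true hB (by decide))
              (iff_of_true hC (by decide))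
              (iff_of_false hD (by decide))
        · by_cases hD : g (false, true) ≠ g (true, true)
          · refine ⟨ℕ, fun p => if p.1 then (if p.2 then 1 else 0) else (if p.2 then 0 else 0), ?_⟩
            rw [mrg_eq_pattern f g, mrg_eq_pattern]
            exact pattern_congr (iff_of_false hA (by decide))
              (iff_of_true hB (by decide))
              (iff_of_false hC (by decide))
              (iff_of_true hD (by decide))
          · exact absurd (Or.inr (Or.inl ⟨hA, hB, hC, hD⟩)) hone
      · by_cases hC : g (false, false) ≠ g (true, false)
        · by_cases hD : g (false, true) ≠ g (true, true)
          · refine ⟨ℕ, fun p => if p.1 then (if p.2 then 1 else 1) else (if p.2 then 0 else 0), ?_⟩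
            rw [mrg_eq_pattern f g, mrg_eq_pattern]
            exact pattern_congr (iff_of_false hA (by decide))
              (iff_of_false hB (by decide))
              (iff_of_true hC (by decide))
              (iff_of_true hD (by decide))
          · exact absurd (Or.inr (Or.inr (Or.inl ⟨hA, hB, hC, hD⟩))) hone
        · by_cases hD : g (false, true) ≠ g (true, true)
          · exact absurd (Or.inr (Or.inr (Or.inr ⟨hA, hB, hC, hD⟩))) hone
          · refine ⟨ℕ, fun p => if p.1 then (if p.2 then 0 else 0) else (if p.2 then 0 else 0), ?_⟩
            rw [mrg_eq_pattern f g, mrg_eq_pattern]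
            exact pattern_congr (iff_of_false hA (by decide))
              (iff_of_false hB (by decide))
              (iff_of_false hC (by decide))
              (iff_of_false hD (by decide))
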